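/- For probes s_{ij} = a^{i·t}·b^{j·t} embedded in D = a^{r·t}·b^{m·t}, the Hamming distance between the embeddings of s_{i1 j1} and s_{i2 j2} equals (|i1 − i2| + |j1 − j2|) · t; in particular it is at least t for distinct probes, and equals t iff the index pairs are at Manhattan distance 1. -/
import Mathlib


/-- The greedy leftmost embedding of a string `s` into a supersequence `D`. -/
def emb {α : Type*} [DecidableEq α] : List α → List α → List (Option α)
  | [], _ => []
  | _ :: D, [] => none :: emb D []
  | d :: D, c :: s => if d = c then some c :: emb D s else none :: emb D (c :: s)

/-- Hamming distance between two lists (of equal length). -/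
def hammingL {β : Type*} [DecidableEq β] : List β → List β → ℕ
  | x :: xs, y :: ys => (if x = y then 0 else 1) + hammingL xs ys
  | _, _ => 0

lemma emb_nil' {α : Type*} [DecidableEq α] (D : List α) :
    emb D [] = List.replicate D.length (none : Option α) := by
  induction D with
  | nil => rfl
  | cons d D ih => simp [emb, ih, List.replicate_succ]

lemma emb_skip {α : Type*} [DecidableEq α] (a c : α) (h : a ≠ c) (n : ℕ) (D s : List α) :
    emb (List.replicate n a ++ D) (c :: s) = List.replicate n none ++ emb D (c :: s) := by
  induction n with
  | zero => simp
  | succ n ih => simp [List.replicate_succ, emb, h, ih]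

lemma emb_take {α : Type*} [DecidableEq α] (a : α) (i R : ℕ) (h : i ≤ R) (D s : List α) :
    emb (List.replicate R a ++ D) (List.replicate i a ++ s)
      = List.replicate i (some a) ++ emb (List.replicate (R - i) a ++ D) s := by
  induction i generalizing R with
  | zero => simp
  | succ i ih =>
    cases R with
    | zero => omega
    | succ R =>
      simp [List.replicate_succ, emb, Nat.succ_sub_succ, ih R (Nat.le_of_succ_le_succ h)]

lemma emb_b_part {α : Type*} [DecidableEq α] (a b : α) (hab : a ≠ b) (p j M : ℕ)
    (hj : j ≤ M) :
    emb (List.replicate p a ++ List.replicate M b) (List.replicate j b)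
      = List.replicate p none ++ (List.replicate j (some b) ++ List.replicate (M - j) none) := by
  cases j with
  | zero =>
    simp [emb_nil', ← List.replicate_add]
  | succ j =>
    rw [List.replicate_succ, emb_skip a b hab]
    have : emb (List.replicate M b) (b :: List.replicate j b)
        = List.replicate (j + 1) (some b) ++ List.replicate (M - (j + 1)) none := by
      have h1 : (b :: List.replicate j b) = List.replicate (j+1) b ++ ([] : List α) := by
        simp [List.replicate_succ]
      have h2 : List.replicate M b = List.replicate M b ++ ([] : List α) := by simp
      rw [h1, h2, emb_take b (j+1) M hj, emb_nil']
      simp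
    rw [this]

lemma emb_full {α : Type*} [DecidableEq α] (a b : α) (hab : a ≠ b) (R M i j : ℕ)
    (hi : i ≤ R) (hj : j ≤ M) :
    emb (List.replicate R a ++ List.replicate M b)
        (List.replicate i a ++ List.replicate j b)
      = (List.replicate i (some a) ++ List.replicate (R - i) none)
        ++ (List.replicate j (some b) ++ List.replicate (M - j) none) := by
  rw [emb_take a i R hi, emb_b_part a b hab _ j M hj, List.append_assoc]

lemma hammingL_append {β : Type*} [DecidableEq β] (x1 x2 y1 y2 : List β)
    (h : x1.length = x2.length) :
    hammingL (x1 ++ y1) (x2 ++ y2) = hammingL x1 x2 + hammingL y1 y2 := by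
  induction x1 generalizing x2 with
  | nil =>
    cases x2 with
    | nil => simp [hammingL]
    | cons d x2 => simp at h
  | cons c x1 ih =>
    cases x2 with
    | nil => simp at h
    | cons d x2 =>
      have h' := ih x2 (by simpa using h)
      simp only [List.cons_append, hammingL, List.append_eq] at *
      omega

lemma hammingL_replicate {β : Type*} [DecidableEq β] (x y : β) (n : ℕ) :
    hammingL (List.replicate n x) (List.replicate n y) = if x = y then 0 else n := by
  induction n with
  | zero => simp [hammingL]
  | succ n ih =>
    simp only [List.replicate_succ, hammingL, ih]
    split <;> omega

lemma hammingL_comm {β : Type*} [DecidableEq β] (s t : List β) :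
    hammingL s t = hammingL t s := by
  induction s generalizing t with
  | nil => cases t <;> simp [hammingL]
  | cons c s ih =>
    cases t with
    | nil => simp [hammingL]
    | cons d t => simp [hammingL, ih, eq_comm]

lemma block_le {β : Type*} [DecidableEq β] (x y : β) (hxy : x ≠ y) (i1 i2 R : ℕ)
    (h12 : i1 ≤ i2) (h2 : i2 ≤ R) :
    hammingL (List.replicate i1 x ++ List.replicate (R - i1) y)
             (List.replicate i2 x ++ List.replicate (R - i2) y) = i2 - i1 := by
  have e1 : List.replicate (R - i1) y
      = List.replicate (i2 - i1) y ++ List.replicate (R - i2) y := by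
    rw [← List.replicate_add]; congr 1; omega
  have e2 : List.replicate i2 x
      = List.replicate i1 x ++ List.replicate (i2 - i1) x := by
    rw [← List.replicate_add]; congr 1; omega
  rw [e1, e2, List.append_assoc,
    hammingL_append _ _ _ _ (by simp),
    hammingL_append _ _ _ _ (by simp),
    hammingL_replicate, hammingL_replicate, hammingL_replicate]
  simp [hxy, (Ne.symm hxy : y ≠ x)]

lemma block {β : Type*} [DecidableEq β] (x y : β) (hxy : x ≠ y) (i1 i2 R : ℕ)
    (h1 : i1 ≤ R) (h2 : i2 ≤ R) :
    hammingL (List.replicate i1 x ++ List.replicate (R - i1) y)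
             (List.replicate i2 x ++ List.replicate (R - i2) y) = Nat.dist i1 i2 := by
  rcases le_total i1 i2 with h | h
  · rw [block_le x y hxy i1 i2 R h h2]; simp [Nat.dist]; omega
  · rw [hammingL_comm, block_le x y hxy i2 i1 R h h1]; simp [Nat.dist]; omega

/-- For probes `s_{ij} = a^{i·t}·b^{j·t}` greedily embedded into
`D = a^{r·t}·b^{m·t}`, the Hamming distance between the embeddings of
`s_{i₁j₁}` and `s_{i₂j₂}` equals `(|i₁ − i₂| + |j₁ − j₂|)·t`. -/
theorem stmt_18 {α : Type*} [DecidableEq α] (a b : α) (hab : a ≠ b)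
    (r m t i1 i2 j1 j2 : ℕ)
    (hi1 : i1 ≤ r) (hi2 : i2 ≤ r) (hj1 : j1 ≤ m) (hj2 : j2 ≤ m) :
    hammingL
      (emb (List.replicate (r * t) a ++ List.replicate (m * t) b)
        (List.replicate (i1 * t) a ++ List.replicate (j1 * t) b))
      (emb (List.replicate (r * t) a ++ List.replicate (m * t) b)
        (List.replicate (i2 * t) a ++ List.replicate (j2 * t) b))
      = (Nat.dist i1 i2 + Nat.dist j1 j2) * t := by
  have hi1' : i1 * t ≤ r * t := Nat.mul_le_mul_right t hi1
  have hi2' : i2 * t ≤ r * t := Nat.mul_le_mul_right t hi2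
  have hj1' : j1 * t ≤ m * t := Nat.mul_le_mul_right t hj1
  have hj2' : j2 * t ≤ m * t := Nat.mul_le_mul_right t hj2
  rw [emb_full a b hab _ _ _ _ hi1' hj1', emb_full a b hab _ _ _ _ hi2' hj2',
    hammingL_append _ _ _ _ (by simp; omega),
    block (some a) none (by simp) _ _ _ hi1' hi2',
    block (some b) none (by simp) _ _ _ hj1' hj2',
    add_mul, Nat.dist_mul_right, Nat.dist_mul_right]
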